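/- Let f be a k-homogeneous Boolean function on 𝔽₂^n and let f̄ be its complement (replace each monomial m by the monomial in the complementary variable set [n]∖Var(m)). For every k-dimensional linear subspace U of 𝔽₂^n: ∑_{x∈U} f(x) ≠ 0 if and only if ∑_{x∈U^⊥} f̄(x) ≠ 0. -/

import Mathlib

/-- Sum of a function over a (finite) set of points. -/
noncomputable def setSum {α β : Type*} [Fintype α] [AddCommMonoid β]
    (S : Set α) (F : α → β) : β :=
  ∑ x ∈ (Set.toFinite S).toFinset, F x

open Module Function

namespace Stmt16Aux

open scoped Classical

noncomputable instance fintypeSubmodule {n : ℕ} (W : Submodule (ZMod 2) (Fin n → ZMod 2)) :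
    Fintype W := Fintype.ofFinite _

variable {n : ℕ}

/-- the orthogonal complement as a submodule -/
def perp (U : Submodule (ZMod 2) (Fin n → ZMod 2)) :
    Submodule (ZMod 2) (Fin n → ZMod 2) where
  carrier := {v : Fin n → ZMod 2 | ∀ u ∈ U, ∑ i, v i * u i = 0}
  add_mem' := by
    intro a b ha hb u hu
    simp only [Pi.add_apply, add_mul]
    rw [Finset.sum_add_distrib, ha u hu, hb u hu, add_zero]
  zero_mem' := by intro u hu; simp
  smul_mem' := by
    intro c a ha u hu
    simp only [Pi.smul_apply, smul_eq_mul, mul_assoc, ← Finset.mul_sum]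
    rw [ha u hu, mul_zero]

lemma mem_perp {U : Submodule (ZMod 2) (Fin n → ZMod 2)} {v : Fin n → ZMod 2} :
    v ∈ perp U ↔ ∀ u ∈ U, ∑ i, v i * u i = 0 := Iff.rfl

lemma le_perp_perp (U : Submodule (ZMod 2) (Fin n → ZMod 2)) : U ≤ perp (perp U) := by
  intro v hv w hw
  rw [← hw v hv]
  exact Finset.sum_congr rfl fun i _ => mul_comm _ _

/-- pairing map into the dual of U -/
noncomputable def psi (U : Submodule (ZMod 2) (Fin n → ZMod 2)) :
    (Fin n → ZMod 2) →ₗ[ZMod 2] (U →ₗ[ZMod 2] ZMod 2) where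
  toFun v :=
    { toFun := fun u => ∑ i, v i * u.1 i
      map_add' := by
        intro a b
        simp only [Submodule.coe_add, Pi.add_apply, mul_add]
        rw [Finset.sum_add_distrib]
      map_smul' := by
        intro c a
        simp only [SetLike.val_smul, Pi.smul_apply, smul_eq_mul, RingHom.id_apply,
          Finset.mul_sum]
        exact Finset.sum_congr rfl fun i _ => by ring }
  map_add' := by
    intro a b
    ext u
    simp only [Pi.add_apply, add_mul, LinearMap.coe_mk, AddHom.coe_mk, LinearMap.add_apply]
    rw [Finset.sum_add_distrib]
  map_smul' := by
    intro c a
    ext u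
    simp only [Pi.smul_apply, smul_eq_mul, LinearMap.coe_mk, AddHom.coe_mk, RingHom.id_apply,
      LinearMap.smul_apply, Finset.mul_sum]
    exact Finset.sum_congr rfl fun i _ => by ring

lemma psi_surjective (U : Submodule (ZMod 2) (Fin n → ZMod 2)) :
    Surjective (psi U) := by
  intro ℓ
  obtain ⟨g, hg⟩ := LinearMap.exists_extend ℓ
  refine ⟨fun i => g (Pi.single i 1), ?_⟩
  ext u
  have hu : (u : Fin n → ZMod 2) = ∑ i, (u : Fin n → ZMod 2) i • Pi.single i 1 := by
    ext j
    simp [Pi.single_apply, Finset.sum_ite_eq']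
  have h1 : ℓ u = g (u : Fin n → ZMod 2) := by
    rw [← hg]; rfl
  have h2 : g (u : Fin n → ZMod 2) = ∑ i, u.1 i * g (Pi.single i 1) := by
    conv_lhs => rw [hu]
    rw [map_sum]
    simp only [map_smul, smul_eq_mul]
  simp only [psi, LinearMap.coe_mk, AddHom.coe_mk]
  rw [h1, h2]
  exact Finset.sum_congr rfl fun i _ => mul_comm _ _

lemma ker_psi (U : Submodule (ZMod 2) (Fin n → ZMod 2)) :
    LinearMap.ker (psi U) = perp U := by
  ext v
  simp only [LinearMap.mem_ker, mem_perp]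
  constructor
  · intro h u hu
    have := congrArg (fun ℓ => ℓ ⟨u, hu⟩) h
    simpa [psi] using this
  · intro h
    ext u
    simpa [psi] using h u.1 u.2

lemma finrank_perp (U : Submodule (ZMod 2) (Fin n → ZMod 2)) :
    finrank (ZMod 2) (perp U) + finrank (ZMod 2) U = n := by
  have h1 := LinearMap.finrank_range_add_finrank_ker (psi U)
  rw [ker_psi, LinearMap.range_eq_top.mpr (psi_surjective U), finrank_top,
    Module.finrank_fin_fun] at h1
  have h2 : finrank (ZMod 2) (U →ₗ[ZMod 2] ZMod 2) = finrank (ZMod 2) U :=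
    Subspace.dual_finrank_eq
  omega

/-- projection of a submodule onto coordinates in S -/
def proj (U : Submodule (ZMod 2) (Fin n → ZMod 2)) (S : Finset (Fin n)) :
    U →ₗ[ZMod 2] ({j // j ∈ S} → ZMod 2) where
  toFun u := fun j => u.1 j.1
  map_add' := by intros; rfl
  map_smul' := by intros; rfl

lemma finrank_target (S : Finset (Fin n)) :
    finrank (ZMod 2) ({j // j ∈ S} → ZMod 2) = S.card := by
  rw [Module.finrank_pi]
  exact Fintype.card_coe S

lemma inj_step (U : Submodule (ZMod 2) (Fin n → ZMod 2)) (S : Finset (Fin n))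
    (hd : finrank (ZMod 2) U = S.card) (h : Injective (proj U S)) :
    Injective (proj (perp U) Sᶜ) := by
  have hfr : finrank (ZMod 2) U = finrank (ZMod 2) ({j // j ∈ S} → ZMod 2) := by
    rw [finrank_target]; exact hd
  have hsurj : Surjective (proj U S) :=
    (LinearMap.injective_iff_surjective_of_finrank_eq_finrank hfr).mp h
  rw [← LinearMap.ker_eq_bot, LinearMap.ker_eq_bot']
  intro y hy0
  have hyc : ∀ j ∉ S, y.1 j = 0 := by
    intro j hj
    have := congrFun hy0 ⟨j, Finset.mem_compl.mpr hj⟩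
    exact this.trans (by congr 1)
  have hyS : ∀ j ∈ S, y.1 j = 0 := by
    intro j hj
    obtain ⟨u, hu⟩ := hsurj (Pi.single (⟨j, hj⟩ : {j // j ∈ S}) 1)
    have h0 : ∑ i, y.1 i * u.1 i = 0 := y.2 u.1 u.2
    rw [← Finset.sum_add_sum_compl S] at h0
    have hc0 : ∑ i ∈ Sᶜ, y.1 i * u.1 i = 0 := by
      apply Finset.sum_eq_zero
      intro i hi
      rw [hyc i (Finset.mem_compl.mp hi), zero_mul]
    have hs : ∑ i ∈ S, y.1 i * u.1 i = y.1 j := by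
      have : ∀ i ∈ S, y.1 i * u.1 i = if i = j then y.1 i else 0 := by
        intro i hi
        have : u.1 i = if i = j then 1 else 0 := by
          have := congrFun hu ⟨i, hi⟩
          rw [Pi.single_apply] at this
          simp only [Subtype.ext_iff] at this
          exact this
        rw [this]
        split <;> simp
      rw [Finset.sum_congr rfl this, Finset.sum_ite_eq' S j]
      simp [hj]
    rw [hs, hc0, add_zero] at h0
    exact h0
  have : y.1 = 0 := by
    ext j
    by_cases hj : j ∈ S
    · exact hyS j hj
    · exact hyc j hj
  exact Subtype.ext this

lemma inj_iff (U : Submodule (ZMod 2) (Fin n → ZMod 2)) (S : Finset (Fin n))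
    (hd : finrank (ZMod 2) U = S.card) :
    Injective (proj U S) ↔ Injective (proj (perp U) Sᶜ) := by
  constructor
  · exact inj_step U S hd
  · intro h
    have hd' : finrank (ZMod 2) (perp U) = Sᶜ.card := by
      have := finrank_perp U
      rw [Finset.card_compl, Fintype.card_fin]
      have hle : S.card ≤ n := by
        have := Finset.card_le_univ S
        simpa using this
      omega
    have h2 := inj_step (perp U) Sᶜ hd' h
    rw [compl_compl] at h2
    intro a b hab
    have : Submodule.inclusion (le_perp_perp U) a = Submodule.inclusion (le_perp_perp U) b := by
      apply h2
      exact hab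
    exact Submodule.inclusion_injective _ this

lemma card_fiber {M N : Type*} [AddCommGroup M] [Module (ZMod 2) M] [Finite M]
    [AddCommGroup N] [Module (ZMod 2) N] [Finite N]
    (φ : M →ₗ[ZMod 2] N) (h : finrank (ZMod 2) M = finrank (ZMod 2) N) (w : N) :
    ((Nat.card {x : M // φ x = w} : ℕ) : ZMod 2) = if Injective φ then 1 else 0 := by
  by_cases hinj : Injective φ
  · have hsurj := (LinearMap.injective_iff_surjective_of_finrank_eq_finrank h).mp hinj
    rw [if_pos hinj]
    obtain ⟨x, hx⟩ := hsurj w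
    have : Nat.card {x : M // φ x = w} = 1 := by
      rw [Nat.card_eq_one_iff_unique]
      refine ⟨⟨fun a b => ?_⟩, ⟨⟨x, hx⟩⟩⟩
      apply Subtype.ext
      exact hinj (a.2.trans b.2.symm)
    rw [this]; norm_num
  · rw [if_neg hinj]
    rw [← LinearMap.ker_eq_bot] at hinj
    obtain ⟨z, hz, hz0⟩ := Submodule.exists_mem_ne_zero_of_ne_bot hinj
    rcases isEmpty_or_nonempty {x : M // φ x = w} with he | hne
    · rw [Nat.card_of_isEmpty]; norm_num
    · obtain ⟨⟨x₀, hx₀⟩⟩ := hne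
      have e : {x : M // φ x = w} ≃ LinearMap.ker φ :=
        { toFun := fun x => ⟨x.1 - x₀, by
            rw [LinearMap.mem_ker, map_sub, x.2, hx₀, sub_self]⟩
          invFun := fun y => ⟨y.1 + x₀, by
            rw [map_add, LinearMap.mem_ker.mp y.2, hx₀, zero_add]⟩
          left_inv := fun x => by apply Subtype.ext; simp
          right_inv := fun y => by apply Subtype.ext; simp }
      rw [Nat.card_congr e]
      letI : Fintype (LinearMap.ker φ) := Fintype.ofFinite _
      rw [Nat.card_eq_fintype_card]
      have hcard := card_eq_pow_finrank (K := ZMod 2) (V := LinearMap.ker φ)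
      have hnt : Nontrivial (LinearMap.ker φ) :=
        ⟨⟨⟨z, hz⟩, 0, by simp [hz0]⟩⟩
      have hpos : 0 < finrank (ZMod 2) (LinearMap.ker φ) := Module.finrank_pos
      rw [hcard]
      simp only [ZMod.card]
      push_cast
      rw [show (2 : ZMod 2) = 0 by decide, zero_pow (by omega)]

lemma prod_eq_ite (x : Fin n → ZMod 2) (S : Finset (Fin n)) :
    ∏ j ∈ S, x j = if ∀ j ∈ S, x j = 1 then 1 else 0 := by
  by_cases h : ∀ j ∈ S, x j = 1
  · rw [if_pos h]
    exact Finset.prod_eq_one h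
  · rw [if_neg h]
    push_neg at h
    obtain ⟨j, hj, hj1⟩ := h
    have h01 : ∀ a : ZMod 2, a = 0 ∨ a = 1 := by decide
    have : x j = 0 := (h01 (x j)).resolve_right hj1
    exact Finset.prod_eq_zero hj this

lemma setSum_submodule (W : Submodule (ZMod 2) (Fin n → ZMod 2))
    (F : (Fin n → ZMod 2) → ZMod 2) :
    setSum (W : Set (Fin n → ZMod 2)) F = ∑ x : W, F x.1 := by
  rw [setSum]
  exact Finset.sum_subtype _ (fun x => by rw [Set.Finite.mem_toFinset]; exact Iff.rfl) F

lemma sum_monomial (W : Submodule (ZMod 2) (Fin n → ZMod 2)) (S : Finset (Fin n))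
    (hd : finrank (ZMod 2) W = S.card) :
    (∑ x : W, ∏ j ∈ S, x.1 j) = if Injective (proj W S) then 1 else 0 := by
  classical
  have step1 : (∑ x : W, ∏ j ∈ S, x.1 j)
      = ∑ x : W, (if proj W S x = (fun _ => 1) then (1 : ZMod 2) else 0) := by
    refine Finset.sum_congr rfl fun x _ => ?_
    rw [prod_eq_ite]
    congr 1
    simp only [eq_iff_iff]
    constructor
    · intro h; funext j; exact h j.1 j.2
    · intro h j hj; exact congrFun h ⟨j, hj⟩
  rw [step1, Finset.sum_boole]
  rw [← Fintype.card_subtype, ← Nat.card_eq_fintype_card]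
  have := card_fiber (proj W S) (by rw [hd, finrank_target]) (fun _ => 1)
  exact this.trans (by congr 1)

end Stmt16Aux

theorem stmt_16 (n k t : ℕ) (I : Fin t → Finset (Fin n))
    (hhom : ∀ i, (I i).card = k)
    (f fbar : (Fin n → ZMod 2) → ZMod 2)
    (hf : ∀ x, f x = ∑ i, ∏ j ∈ I i, x j)
    (hfbar : ∀ x, fbar x = ∑ i, ∏ j ∈ (I i)ᶜ, x j)
    (U : Submodule (ZMod 2) (Fin n → ZMod 2)) (hU : Module.finrank (ZMod 2) U = k) :
    setSum (U : Set (Fin n → ZMod 2)) f ≠ 0 ↔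
      setSum {v : Fin n → ZMod 2 | ∀ u ∈ U, ∑ i, v i * u i = 0} fbar ≠ 0 := by
  have hset : {v : Fin n → ZMod 2 | ∀ u ∈ U, ∑ i, v i * u i = 0}
      = (Stmt16Aux.perp U : Set (Fin n → ZMod 2)) := rfl
  have hdU : ∀ i, finrank (ZMod 2) U = (I i).card := fun i => by rw [hU, hhom i]
  have hdP : ∀ i, finrank (ZMod 2) (Stmt16Aux.perp U) = (I i)ᶜ.card := fun i => by
    have h1 := Stmt16Aux.finrank_perp U
    rw [hU] at h1
    rw [Finset.card_compl, Fintype.card_fin, hhom i]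
    omega
  have key : setSum (U : Set (Fin n → ZMod 2)) f
      = setSum {v : Fin n → ZMod 2 | ∀ u ∈ U, ∑ i, v i * u i = 0} fbar := by
    rw [hset, Stmt16Aux.setSum_submodule U f, Stmt16Aux.setSum_submodule (Stmt16Aux.perp U) fbar]
    calc ∑ x : U, f x.1 = ∑ x : U, ∑ i, ∏ j ∈ I i, x.1 j := by
          exact Finset.sum_congr rfl fun x _ => hf x.1
      _ = ∑ i, ∑ x : U, ∏ j ∈ I i, x.1 j := Finset.sum_comm
      _ = ∑ i, ∑ x : (Stmt16Aux.perp U), ∏ j ∈ (I i)ᶜ, x.1 j := by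
          refine Finset.sum_congr rfl fun i _ => ?_
          rw [Stmt16Aux.sum_monomial U (I i) (hdU i), Stmt16Aux.sum_monomial (Stmt16Aux.perp U) (I i)ᶜ (hdP i)]
          congr 1
          simp only [eq_iff_iff]
          exact Stmt16Aux.inj_iff U (I i) (hdU i)
      _ = ∑ x : (Stmt16Aux.perp U), ∑ i, ∏ j ∈ (I i)ᶜ, x.1 j := Finset.sum_comm
      _ = ∑ x : (Stmt16Aux.perp U), fbar x.1 := by
          exact Finset.sum_congr rfl fun x _ => (hfbar x.1).symm
  rw [key]
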